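/- Let H be a Hopf algebra over k with bijective antipode and B ⊆ A a faithfully flat H-Galois extension admitting a strong connection ℓ: H → A⊗A, ℓ(h) = h^{<1>}⊗h^{<2>}, which satisfies ℓ(kh) = h^{<1>}k^{<1>} ⊗ k^{<2>}h^{<2>} for all h,k∈H. Then the linear map ψ_ℓ: A⊗A → A⊗A, a⊗c ↦ a₍₀₎ c (a₍₁₎)^{<1>} ⊗ (a₍₁₎)^{<2>}, is a twisting map, i.e. the product m^{ψ_ℓ} := (m_A⊗m_A)∘(id_A⊗ψ_ℓ⊗id_A) on A⊗A is associative. -/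

import Mathlib

open TensorProduct LinearMap Function

noncomputable section
namespace Paper

variable (k : Type*) [Field k]
section Twist
variable (A : Type*) [Ring A] [Algebra k A] (C : Type*) [Ring C] [Algebra k C]

/-- The twisted multiplication `m^ψ := (m_C ⊗ m_A) ∘ (id_C ⊗ ψ ⊗ id_A)` as a linear map
`(C ⊗ A) ⊗ (C ⊗ A) → C ⊗ A`. -/
def tmulMap (ψ : A ⊗[k] C →ₗ[k] C ⊗[k] A) :
    (C ⊗[k] A) ⊗[k] (C ⊗[k] A) →ₗ[k] C ⊗[k] A :=
  TensorProduct.map (LinearMap.mul' k C) (LinearMap.mul' k A)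
    ∘ₗ (TensorProduct.assoc k (C ⊗[k] C) A A).toLinearMap
    ∘ₗ TensorProduct.map (TensorProduct.assoc k C C A).symm.toLinearMap LinearMap.id
    ∘ₗ TensorProduct.map (LinearMap.lTensor C ψ) LinearMap.id
    ∘ₗ TensorProduct.map (TensorProduct.assoc k C A C).toLinearMap LinearMap.id
    ∘ₗ (TensorProduct.assoc k (C ⊗[k] A) C A).symm.toLinearMap

/-- The twisted product of two elements of `C ⊗ A`. -/
def tmul (ψ : A ⊗[k] C →ₗ[k] C ⊗[k] A) (x y : C ⊗[k] A) : C ⊗[k] A :=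
  tmulMap k A C ψ (x ⊗ₜ y)

/-- `ψ` is a twisting map when the product `m^ψ` is associative. -/
def IsTwistingMap (ψ : A ⊗[k] C →ₗ[k] C ⊗[k] A) : Prop :=
  ∀ x y z : C ⊗[k] A,
    tmul k A C ψ (tmul k A C ψ x y) z = tmul k A C ψ x (tmul k A C ψ y z)

/-- `ψ (a ⊗ 1_C) = 1_C ⊗ a`. -/
def LeftNormal (ψ : A ⊗[k] C →ₗ[k] C ⊗[k] A) : Prop :=
  ∀ a : A, ψ (a ⊗ₜ (1 : C)) = (1 : C) ⊗ₜ a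

/-- `ψ (1_A ⊗ c) = c ⊗ 1_A`. -/
def RightNormal (ψ : A ⊗[k] C →ₗ[k] C ⊗[k] A) : Prop :=
  ∀ c : C, ψ ((1 : A) ⊗ₜ c) = c ⊗ₜ (1 : A)

/-- Distributive law (C1): `ψ ∘ (m_A ⊗ id_C) = (id_C ⊗ m_A) ∘ (ψ ⊗ id_A) ∘ (id_A ⊗ ψ)`. -/
def DistLawC1 (ψ : A ⊗[k] C →ₗ[k] C ⊗[k] A) : Prop :=
  ψ ∘ₗ rTensor C (LinearMap.mul' k A)
    = lTensor C (LinearMap.mul' k A)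
        ∘ₗ (TensorProduct.assoc k C A A).toLinearMap
        ∘ₗ rTensor A ψ
        ∘ₗ (TensorProduct.assoc k A C A).symm.toLinearMap
        ∘ₗ lTensor A ψ
        ∘ₗ (TensorProduct.assoc k A A C).toLinearMap

/-- Distributive law (C2): `ψ ∘ (id_A ⊗ m_C) = (m_C ⊗ id_A) ∘ (id_C ⊗ ψ) ∘ (ψ ⊗ id_C)`. -/
def DistLawC2 (ψ : A ⊗[k] C →ₗ[k] C ⊗[k] A) : Prop :=
  ψ ∘ₗ lTensor A (LinearMap.mul' k C)
    = rTensor A (LinearMap.mul' k C)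
        ∘ₗ (TensorProduct.assoc k C C A).symm.toLinearMap
        ∘ₗ lTensor C ψ
        ∘ₗ (TensorProduct.assoc k C A C).toLinearMap
        ∘ₗ rTensor C ψ
        ∘ₗ (TensorProduct.assoc k A C C).symm.toLinearMap

/-- The left-hand side of the associativity condition (Oeq):
`(id_C ⊗ m_A) ∘ (ψ ⊗ id_A) ∘ (id_A ⊗ m_C ⊗ id_A) ∘ (id_A ⊗ id_C ⊗ ψ)`. -/
def OeqLHS (ψ : A ⊗[k] C →ₗ[k] C ⊗[k] A) :
    (A ⊗[k] C) ⊗[k] (A ⊗[k] C) →ₗ[k] C ⊗[k] A :=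
  lTensor C (LinearMap.mul' k A)
    ∘ₗ (TensorProduct.assoc k C A A).toLinearMap
    ∘ₗ rTensor A ψ
    ∘ₗ TensorProduct.map (lTensor A (LinearMap.mul' k C)) LinearMap.id
    ∘ₗ TensorProduct.map (TensorProduct.assoc k A C C).toLinearMap LinearMap.id
    ∘ₗ (TensorProduct.assoc k (A ⊗[k] C) C A).symm.toLinearMap
    ∘ₗ lTensor (A ⊗[k] C) ψ

/-- The right-hand side of the associativity condition (Oeq):
`(m_C ⊗ id_A) ∘ (id_C ⊗ ψ) ∘ (id_C ⊗ m_A ⊗ id_C) ∘ (ψ ⊗ id_A ⊗ id_C)`. -/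
def OeqRHS (ψ : A ⊗[k] C →ₗ[k] C ⊗[k] A) :
    (A ⊗[k] C) ⊗[k] (A ⊗[k] C) →ₗ[k] C ⊗[k] A :=
  rTensor A (LinearMap.mul' k C)
    ∘ₗ (TensorProduct.assoc k C C A).symm.toLinearMap
    ∘ₗ lTensor C ψ
    ∘ₗ (TensorProduct.assoc k C A C).toLinearMap
    ∘ₗ TensorProduct.map (lTensor C (LinearMap.mul' k A)) LinearMap.id
    ∘ₗ TensorProduct.map (TensorProduct.assoc k C A A).toLinearMap LinearMap.id
    ∘ₗ (TensorProduct.assoc k (C ⊗[k] A) A C).symm.toLinearMap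
    ∘ₗ rTensor (A ⊗[k] C) ψ

/-- The set of relations `c ⊗ (b·a) - (c·F(b)) ⊗ a` defining the push-forward `C ⊗_B A`. -/
def relSet (B : Subalgebra k A) (F : B →ₐ[k] C) : Set (C ⊗[k] A) :=
  {x | ∃ (c : C) (b : B) (a : A), x = c ⊗ₜ ((b : A) * a) - (c * F b) ⊗ₜ a}

/-- The subspace spanned by the relations defining the push-forward `C ⊗_B A`. -/
def relSpan (B : Subalgebra k A) (F : B →ₐ[k] C) : Submodule k (C ⊗[k] A) :=
  Submodule.span k (relSet k A C B F)

end Twist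
section Star
variable [StarRing k] [TrivialStar k]
variable (X : Type*) [Ring X] [Algebra k X] [StarRing X] [StarModule k X]
variable (Y : Type*) [Ring Y] [Algebra k Y] [StarRing Y] [StarModule k Y]

/-- The map `(∗_Y ⊗ ∗_X) ∘ flip : X ⊗ Y → Y ⊗ X`, `x ⊗ y ↦ y* ⊗ x*`. -/
def starFlip : X ⊗[k] Y →ₗ[k] Y ⊗[k] X :=
  TensorProduct.lift (LinearMap.mk₂ k (fun x y => (star y : Y) ⊗ₜ[k] (star x : X))
    (fun x x' y => by simp [star_add, TensorProduct.tmul_add])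
    (fun r x y => by simp [star_smul, star_trivial, TensorProduct.tmul_smul])
    (fun x y y' => by simp [star_add, TensorProduct.add_tmul])
    (fun r x y => by simp [star_smul, star_trivial, TensorProduct.smul_tmul']))

@[simp] lemma starFlip_tmul (x : X) (y : Y) :
    starFlip k X Y (x ⊗ₜ y) = (star y : Y) ⊗ₜ (star x : X) := rfl

end Star
section Flat
variable (R : Type*) [Ring R] (M : Type*) [AddCommGroup M] [Module R M]

/-- Flatness of a left module over a (possibly noncommutative) ring, via the equational
criterion: every linear relation among elements of `M` is a consequence of linear relations
holding in `R`. -/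
def IsFlatLeft : Prop :=
  ∀ (n : ℕ) (r : Fin n → R) (x : Fin n → M), (∑ i, r i • x i) = 0 →
    ∃ (m : ℕ) (a : Fin n → Fin m → R) (y : Fin m → M),
      (∀ i, x i = ∑ j, a i j • y j) ∧ ∀ j, (∑ i, r i * a i j) = 0

/-- Faithful flatness of a left module over a (possibly noncommutative) ring: flatness
together with `I·M ≠ M` for every maximal right ideal `I` of `R`. -/
def IsFaithfullyFlatLeft : Prop :=
  IsFlatLeft R M ∧ ∀ I : Submodule Rᵐᵒᵖ R, IsCoatom I →
    AddSubgroup.closure {z : M | ∃ i ∈ I, ∃ v : M, z = i • v} ≠ ⊤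

end Flat
section Hopf
variable (A : Type*) [Ring A] [Algebra k A] (C : Type*) [Ring C] [Algebra k C]
variable (H : Type*) [Ring H] [HopfAlgebra k H]

/-- `δ : A → A ⊗ H` makes `A` a right `H`-comodule algebra: `δ` is an algebra map (built in)
which is coassociative and counital. -/
def IsComodAlg (δ : A →ₐ[k] A ⊗[k] H) : Prop :=
  ((TensorProduct.assoc k A H H).toLinearMap ∘ₗ rTensor H δ.toLinearMap ∘ₗ δ.toLinearMap
      = lTensor A (Coalgebra.comul (R := k) (A := H)) ∘ₗ δ.toLinearMap)
    ∧ ((TensorProduct.rid k A).toLinearMap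
        ∘ₗ lTensor A (Coalgebra.counit (R := k) (A := H)) ∘ₗ δ.toLinearMap
      = LinearMap.id)

/-- The subalgebra `A^{co H}` of coinvariant elements of a comodule algebra. -/
def coinv (δ : A →ₐ[k] A ⊗[k] H) : Subalgebra k A where
  carrier := {a | δ a = a ⊗ₜ[k] (1 : H)}
  mul_mem' := by
    intro a b ha hb
    simp only [Set.mem_setOf_eq] at *
    rw [map_mul, ha, hb, Algebra.TensorProduct.tmul_mul_tmul, one_mul]
  one_mem' := by
    simp only [Set.mem_setOf_eq, map_one, Algebra.TensorProduct.one_def]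
  add_mem' := by
    intro a b ha hb
    simp only [Set.mem_setOf_eq] at *
    rw [map_add, ha, hb, TensorProduct.add_tmul]
  algebraMap_mem' := by
    intro r
    simp only [Set.mem_setOf_eq, AlgHom.commutes, Algebra.TensorProduct.algebraMap_apply]

/-- The canonical map `A ⊗ A → A ⊗ H`, `a ⊗ a' ↦ a a'₍₀₎ ⊗ a'₍₁₎` (before taking the
quotient `A ⊗_B A`). -/
def chi0 (δ : A →ₐ[k] A ⊗[k] H) : A ⊗[k] A →ₗ[k] A ⊗[k] H :=
  rTensor H (LinearMap.mul' k A)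
    ∘ₗ (TensorProduct.assoc k A A H).symm.toLinearMap
    ∘ₗ lTensor A δ.toLinearMap

/-- The coaction `id_C ⊗ δ` on `C ⊗ A` (with `C` a trivial comodule), as a map
`C ⊗ A → (C ⊗ A) ⊗ H`. -/
def coactT (δ : A →ₐ[k] A ⊗[k] H) : C ⊗[k] A →ₗ[k] (C ⊗[k] A) ⊗[k] H :=
  (TensorProduct.assoc k C A H).symm.toLinearMap ∘ₗ lTensor C δ.toLinearMap

/-- `ψ : A ⊗ C → C ⊗ A` is a morphism of right `H`-comodules:
`(id_C ⊗ δ) ∘ ψ = (ψ ⊗ id_H) ∘ (id_A ⊗ flip) ∘ (δ ⊗ id_C)`. -/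
def IsComodMor (δ : A →ₐ[k] A ⊗[k] H) (ψ : A ⊗[k] C →ₗ[k] C ⊗[k] A) : Prop :=
  lTensor C δ.toLinearMap ∘ₗ ψ
    = (TensorProduct.assoc k C A H).toLinearMap
        ∘ₗ rTensor H ψ
        ∘ₗ (TensorProduct.assoc k A C H).symm.toLinearMap
        ∘ₗ lTensor A (TensorProduct.comm k H C).toLinearMap
        ∘ₗ (TensorProduct.assoc k A H C).toLinearMap
        ∘ₗ rTensor C δ.toLinearMap

variable {k H} in
/-- Given a multiplication `m` on `P`, the induced multiplication on `P ⊗ H`. -/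
def tmulH {P : Type*} [AddCommGroup P] [Module k P] (m : P →ₗ[k] P →ₗ[k] P) :
    P ⊗[k] H →ₗ[k] P ⊗[k] H →ₗ[k] P ⊗[k] H :=
  TensorProduct.map₂ m (LinearMap.mul k H)

variable {k H} in
/-- The canonical Galois map `P ⊗ P → P ⊗ H`, `x ⊗ y ↦ (x ·_m y₍₀₎) ⊗ y₍₁₎`, for a
multiplication `m` and a coaction `db` on `P`. -/
def chiP {P : Type*} [AddCommGroup P] [Module k P]
    (m : P →ₗ[k] P →ₗ[k] P) (db : P →ₗ[k] P ⊗[k] H) : P ⊗[k] P →ₗ[k] P ⊗[k] H :=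
  rTensor H (TensorProduct.lift m)
    ∘ₗ (TensorProduct.assoc k P P H).symm.toLinearMap
    ∘ₗ lTensor P db

variable {k C} in
/-- The span of the relations `(x ·_m e c) ⊗ y - x ⊗ (e c ·_m y)` defining the balanced tensor
product `P ⊗_C P` over the image of `C` in `P`. -/
def balSpan {P : Type*} [AddCommGroup P] [Module k P]
    (m : P →ₗ[k] P →ₗ[k] P) (e : C → P) : Submodule k (P ⊗[k] P) :=
  Submodule.span k {z | ∃ (x y : P) (c : C), z = (m x (e c)) ⊗ₜ y - x ⊗ₜ (m (e c) y)}

variable {k H} in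
/-- Coassociativity of a coaction `db : P → P ⊗ H`. -/
def Coassoc {P : Type*} [AddCommGroup P] [Module k P] (db : P →ₗ[k] P ⊗[k] H) : Prop :=
  (TensorProduct.assoc k P H H).toLinearMap ∘ₗ rTensor H db ∘ₗ db
    = lTensor P (Coalgebra.comul (R := k) (A := H)) ∘ₗ db

variable {k H} in
/-- Counitality of a coaction `db : P → P ⊗ H`. -/
def Counital {P : Type*} [AddCommGroup P] [Module k P] (db : P →ₗ[k] P ⊗[k] H) : Prop :=
  (TensorProduct.rid k P).toLinearMap
      ∘ₗ lTensor P (Coalgebra.counit (R := k) (A := H)) ∘ₗ db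
    = LinearMap.id

variable {k H} in
/-- Convolution product of two linear maps `H → P`, with respect to a multiplication `m`
on `P`. -/
def convP {P : Type*} [AddCommGroup P] [Module k P]
    (m : P →ₗ[k] P →ₗ[k] P) (f g : H →ₗ[k] P) : H →ₗ[k] P :=
  TensorProduct.lift m ∘ₗ TensorProduct.map f g ∘ₗ Coalgebra.comul (R := k) (A := H)

variable {k H} in
/-- The unit for convolution: `h ↦ ε(h) • u`. -/
def convUnit {P : Type*} [AddCommGroup P] [Module k P] (u : P) : H →ₗ[k] P :=
  (Coalgebra.counit (R := k) (A := H)).smulRight u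

end Hopf

section HopfPush
variable (A : Type*) [Ring A] [Algebra k A] (C : Type*) [Ring C] [Algebra k C]
variable (H : Type*) [Ring H] [HopfAlgebra k H]
section PushForward
variable (δ : A →ₐ[k] A ⊗[k] H) (F : coinv k A H δ →ₐ[k] C)

/-- The subspace of `C ⊗ A` defining the push-forward `C ⊗_B A`, `B = A^{co H}`. -/
def pushSpan : Submodule k (C ⊗[k] A) := relSpan k A C (coinv k A H δ) F

/-- The quotient map `C ⊗ A → C ⊗_B A`. -/
def pushQ : C ⊗[k] A →ₗ[k] (C ⊗[k] A) ⧸ pushSpan k A C H δ F :=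
  (pushSpan k A C H δ F).mkQ

/-- `\barψ = π_B ∘ ψ` is a `B`-bimodule morphism. -/
def BarBimod (ψ : A ⊗[k] C →ₗ[k] C ⊗[k] A) : Prop :=
  (∀ (b : coinv k A H δ) (a : A) (c : C),
      pushQ k A C H δ F (ψ (((b : A) * a) ⊗ₜ c))
        = pushQ k A C H δ F (rTensor A (LinearMap.mulLeft k (F b)) (ψ (a ⊗ₜ c))))
  ∧ (∀ (b : coinv k A H δ) (a : A) (c : C),
      pushQ k A C H δ F (ψ (a ⊗ₜ (c * F b)))
        = pushQ k A C H δ F (lTensor C (LinearMap.mulRight k (b : A)) (ψ (a ⊗ₜ c))))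

/-- `\barψ (1_A ⊗ c) = c ⊗_B 1_A` and `\barψ (a ⊗ 1_C) = 1_C ⊗_B a`. -/
def BarNormal (ψ : A ⊗[k] C →ₗ[k] C ⊗[k] A) : Prop :=
  (∀ c : C, pushQ k A C H δ F (ψ ((1 : A) ⊗ₜ c)) = pushQ k A C H δ F (c ⊗ₜ (1 : A)))
  ∧ (∀ a : A, pushQ k A C H δ F (ψ (a ⊗ₜ (1 : C))) = pushQ k A C H δ F ((1 : C) ⊗ₜ a))

/-- `σ` is the canonical left `C`-action on the push-forward `C ⊗_B A`:
`σ c (c' ⊗_B a) = (c c') ⊗_B a`. -/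
def SigmaSpec (σ : C →ₗ[k] ((C ⊗[k] A) ⧸ pushSpan k A C H δ F)
    →ₗ[k] ((C ⊗[k] A) ⧸ pushSpan k A C H δ F)) : Prop :=
  ∀ (c : C) (x : C ⊗[k] A),
    σ c (pushQ k A C H δ F x) = pushQ k A C H δ F (rTensor A (LinearMap.mulLeft k c) x)

/-- The distributive law `\barψ (a ⊗ c c') = c^ψ · \barψ (a^ψ ⊗ c')`, where `·` denotes the
left `C`-action `σ` on the push-forward. -/
def BarDistrib (ψ : A ⊗[k] C →ₗ[k] C ⊗[k] A)
    (σ : C →ₗ[k] ((C ⊗[k] A) ⧸ pushSpan k A C H δ F)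
      →ₗ[k] ((C ⊗[k] A) ⧸ pushSpan k A C H δ F)) : Prop :=
  (pushQ k A C H δ F ∘ₗ ψ) ∘ₗ lTensor A (LinearMap.mul' k C)
    = TensorProduct.lift σ
        ∘ₗ lTensor C (pushQ k A C H δ F ∘ₗ ψ)
        ∘ₗ (TensorProduct.assoc k C A C).toLinearMap
        ∘ₗ rTensor C ψ
        ∘ₗ (TensorProduct.assoc k A C C).symm.toLinearMap

/-- The embedding `C → C ⊗_B A`, `c ↦ c ⊗_B 1_A`. -/
def eC : C → (C ⊗[k] A) ⧸ pushSpan k A C H δ F :=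
  fun c => pushQ k A C H δ F (c ⊗ₜ (1 : A))

end PushForward

section Galois
variable (δ : A →ₐ[k] A ⊗[k] H)

/-- The subspace of `A ⊗ A` defining the balanced tensor product `A ⊗_B A`, `B = A^{co H}`. -/
def galSpan : Submodule k (A ⊗[k] A) :=
  relSpan k A A (coinv k A H δ) (coinv k A H δ).val

/-- The quotient map `A ⊗ A → A ⊗_B A`. -/
def galQ : A ⊗[k] A →ₗ[k] (A ⊗[k] A) ⧸ galSpan k A H δ := (galSpan k A H δ).mkQ

/-- The translation map `τ = χ⁻¹(1_A ⊗ -) : H → A ⊗_B A` obtained from a bijective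
canonical map `χ`. -/
def transMap (χ : ((A ⊗[k] A) ⧸ galSpan k A H δ) ≃ₗ[k] A ⊗[k] H) :
    H →ₗ[k] (A ⊗[k] A) ⧸ galSpan k A H δ :=
  χ.symm.toLinearMap ∘ₗ TensorProduct.mk k A H 1

end Galois
end HopfPush
end Paper


set_option maxHeartbeats 1000000
set_option synthInstance.maxHeartbeats 1000000

namespace SCAux

variable {k : Type*} [Field k] {A : Type*} [Ring A] [Algebra k A]

/-- `mulIn φ (d ⊗ y) = (d ⊗ 1) * φ y`. -/
def mulIn {Y : Type*} [AddCommMonoid Y] [Module k Y] (φ : Y →ₗ[k] A ⊗[k] A) :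
    A ⊗[k] Y →ₗ[k] A ⊗[k] A :=
  TensorProduct.lift (LinearMap.mk₂ k (fun d y => (d ⊗ₜ[k] (1 : A)) * φ y)
    (fun d d' y => by simp [add_tmul, add_mul])
    (fun r d y => by rw [← smul_tmul', smul_mul_assoc])
    (fun d y y' => by simp [map_add, mul_add])
    (fun r d y => by simp [map_smul, mul_smul_comm]))

@[simp] lemma mulIn_tmul {Y : Type*} [AddCommMonoid Y] [Module k Y] (φ : Y →ₗ[k] A ⊗[k] A)
    (d : A) (y : Y) : mulIn φ (d ⊗ₜ y) = (d ⊗ₜ[k] (1 : A)) * φ y := by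
  simp [mulIn]

/-- `mulIn' φ (y ⊗ e) = φ y * (1 ⊗ e)`. -/
def mulIn' {Y : Type*} [AddCommMonoid Y] [Module k Y] (φ : Y →ₗ[k] A ⊗[k] A) :
    Y ⊗[k] A →ₗ[k] A ⊗[k] A :=
  TensorProduct.lift (LinearMap.mk₂ k (fun y e => φ y * ((1 : A) ⊗ₜ[k] e))
    (fun y y' e => by simp [map_add, add_mul])
    (fun r y e => by rw [map_smul, smul_mul_assoc])
    (fun y e e' => by simp [tmul_add, mul_add])
    (fun r y e => by simp [tmul_smul, mul_smul_comm]))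

@[simp] lemma mulIn'_tmul {Y : Type*} [AddCommMonoid Y] [Module k Y] (φ : Y →ₗ[k] A ⊗[k] A)
    (y : Y) (e : A) : mulIn' φ (y ⊗ₜ e) = φ y * ((1 : A) ⊗ₜ[k] e) := by
  simp [mulIn']

lemma mulIn_pmul {Y : Type*} [Ring Y] [Algebra k Y] (φ : Y →ₗ[k] A ⊗[k] A) (p : A)
    (z : A ⊗[k] Y) : mulIn φ ((p ⊗ₜ[k] (1 : Y)) * z) = (p ⊗ₜ[k] (1 : A)) * mulIn φ z := by
  induction z using TensorProduct.induction_on with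
  | zero => simp
  | tmul d y => simp [Algebra.TensorProduct.tmul_mul_tmul, ← mul_assoc]
  | add z₁ z₂ h₁ h₂ => simp [mul_add, h₁, h₂]

lemma mulIn'_pmul (φ : A →ₗ[k] A ⊗[k] A) (p : A) (s : A ⊗[k] A) :
    mulIn' φ ((p ⊗ₜ[k] (1 : A)) * s) = mulIn' (φ ∘ₗ LinearMap.mulLeft k p) s := by
  induction s using TensorProduct.induction_on with
  | zero => simp
  | tmul u v => simp [Algebra.TensorProduct.tmul_mul_tmul]
  | add s₁ s₂ h₁ h₂ => simp [mul_add, h₁, h₂]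

lemma mulIn_comp {Y Y' : Type*} [AddCommMonoid Y] [Module k Y] [AddCommMonoid Y'] [Module k Y']
    (φ : Y →ₗ[k] A ⊗[k] A) (f : Y' →ₗ[k] Y) :
    mulIn (φ ∘ₗ f) = mulIn φ ∘ₗ lTensor A f := by
  apply TensorProduct.ext'
  intro d y
  simp

lemma mulIn'_addφ {Y : Type*} [AddCommMonoid Y] [Module k Y] (φ₁ φ₂ : Y →ₗ[k] A ⊗[k] A)
    (s : Y ⊗[k] A) : mulIn' (φ₁ + φ₂) s = mulIn' φ₁ s + mulIn' φ₂ s := by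
  induction s using TensorProduct.induction_on with
  | zero => simp
  | tmul y e => simp [add_mul]
  | add s₁ s₂ h₁ h₂ => simp [h₁, h₂]; abel

lemma mulIn'_zeroφ {Y : Type*} [AddCommMonoid Y] [Module k Y] (s : Y ⊗[k] A) :
    mulIn' (0 : Y →ₗ[k] A ⊗[k] A) s = 0 := by
  induction s using TensorProduct.induction_on with
  | zero => simp
  | tmul y e => simp
  | add s₁ s₂ h₁ h₂ => simp [h₁, h₂]

lemma slm (x q : A) (s r : A ⊗[k] A) :
    mulIn' (LinearMap.mulRight k r ∘ₗ (TensorProduct.mk k A A).flip (1 : A)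
        ∘ₗ LinearMap.mulLeft k x ∘ₗ LinearMap.mulLeft k q) s
      = ((x * q) ⊗ₜ[k] (1 : A)) *
        (TensorProduct.map (LinearMap.mul' k A)
            (LinearMap.mul' k A ∘ₗ (TensorProduct.comm k A A).toLinearMap))
          ((TensorProduct.tensorTensorTensorComm k A A A A) (s ⊗ₜ r)) := by
  induction s using TensorProduct.induction_on with
  | zero => simp
  | tmul u v =>
    induction r using TensorProduct.induction_on with
    | zero => simp
    | tmul u₂ v₂ =>
      simp [Algebra.TensorProduct.tmul_mul_tmul, mul_assoc]
    | add r₁ r₂ h₁ h₂ =>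
      have : LinearMap.mulRight k (r₁ + r₂) = LinearMap.mulRight k r₁ + LinearMap.mulRight k r₂ := by
        ext z; simp [mul_add]
      rw [this]
      simp only [LinearMap.add_comp, LinearMap.comp_add]
      rw [mulIn'_addφ]
      simp only [tmul_add, map_add, mul_add, h₁, h₂]
  | add s₁ s₂ h₁ h₂ =>
    simp only [map_add, add_tmul, mul_add, h₁, h₂]

lemma slk {H : Type*} [Ring H] [Algebra k H] (Φ : A ⊗[k] H →ₗ[k] A ⊗[k] A)
    (hΦ : ∀ (v : A) (z : A ⊗[k] H), Φ ((v ⊗ₜ[k] (1 : H)) * z) = (v ⊗ₜ[k] (1 : A)) * Φ z)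
    (U : (A ⊗[k] A) ⊗[k] H) :
    mulIn Φ ((TensorProduct.assoc k A A H) U)
      = mulIn (Φ ∘ₗ TensorProduct.mk k A H 1) (rTensor H (LinearMap.mul' k A) U) := by
  induction U using TensorProduct.induction_on with
  | zero => simp
  | tmul s g =>
    induction s using TensorProduct.induction_on with
    | zero => simp
    | tmul u v =>
      simp only [assoc_tmul, mulIn_tmul, rTensor_tmul, mul'_apply, LinearMap.comp_apply,
        TensorProduct.mk_apply]
      rw [show (v ⊗ₜ[k] g : A ⊗[k] H) = (v ⊗ₜ[k] (1 : H)) * ((1 : A) ⊗ₜ[k] g) by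
        simp [Algebra.TensorProduct.tmul_mul_tmul]]
      rw [hΦ, ← mul_assoc, Algebra.TensorProduct.tmul_mul_tmul, mul_one]
    | add s₁ s₂ h₁ h₂ => simp only [add_tmul, map_add, h₁, h₂]
  | add U₁ U₂ h₁ h₂ => simp [h₁, h₂]

variable {H : Type*}

lemma tmul_zero_left (ψ : A ⊗[k] A →ₗ[k] A ⊗[k] A) (y : A ⊗[k] A) :
    Paper.tmul k A A ψ 0 y = 0 := by
  simp [Paper.tmul, zero_tmul]

lemma tmul_add_left (ψ : A ⊗[k] A →ₗ[k] A ⊗[k] A) (x₁ x₂ y : A ⊗[k] A) :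
    Paper.tmul k A A ψ (x₁ + x₂) y = Paper.tmul k A A ψ x₁ y + Paper.tmul k A A ψ x₂ y := by
  simp [Paper.tmul, add_tmul]

lemma tmul_zero_right (ψ : A ⊗[k] A →ₗ[k] A ⊗[k] A) (x : A ⊗[k] A) :
    Paper.tmul k A A ψ x 0 = 0 := by
  simp [Paper.tmul, tmul_zero]

lemma tmul_add_right (ψ : A ⊗[k] A →ₗ[k] A ⊗[k] A) (x y₁ y₂ : A ⊗[k] A) :
    Paper.tmul k A A ψ x (y₁ + y₂) = Paper.tmul k A A ψ x y₁ + Paper.tmul k A A ψ x y₂ := by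
  simp [Paper.tmul, tmul_add]

lemma tmul_tmul (ψ : A ⊗[k] A →ₗ[k] A ⊗[k] A) (c a c' a' : A) :
    Paper.tmul k A A ψ (c ⊗ₜ[k] a) (c' ⊗ₜ[k] a')
      = (c ⊗ₜ[k] (1 : A)) * ψ (a ⊗ₜ[k] c') * ((1 : A) ⊗ₜ[k] a') := by
  simp only [Paper.tmul, Paper.tmulMap, LinearMap.comp_apply, LinearEquiv.coe_coe,
    assoc_symm_tmul, map_tmul, assoc_tmul, lTensor_tmul, LinearMap.id_coe, id_eq]
  generalize ψ (a ⊗ₜ[k] c') = s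
  induction s using TensorProduct.induction_on with
  | zero => simp
  | tmul d e =>
    simp [Algebra.TensorProduct.tmul_mul_tmul]
  | add s₁ s₂ h₁ h₂ =>
    simp only [tmul_add, map_add, add_mul, mul_add, h₁, h₂, add_tmul]

lemma red_left (ψ : A ⊗[k] A →ₗ[k] A ⊗[k] A) (c a' c'' a'' : A) (t : A ⊗[k] A) :
    Paper.tmul k A A ψ ((c ⊗ₜ[k] (1 : A)) * t * ((1 : A) ⊗ₜ[k] a')) (c'' ⊗ₜ[k] a'')
      = (c ⊗ₜ[k] (1 : A)) *
          mulIn (ψ ∘ₗ (TensorProduct.mk k A A).flip c'' ∘ₗ LinearMap.mulRight k a') t *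
          ((1 : A) ⊗ₜ[k] a'') := by
  induction t using TensorProduct.induction_on with
  | zero => simp [tmul_zero_left]
  | tmul d e =>
    rw [show (c ⊗ₜ[k] (1 : A)) * (d ⊗ₜ[k] e) * ((1 : A) ⊗ₜ[k] a')
        = (c * d) ⊗ₜ[k] (e * a') by simp [Algebra.TensorProduct.tmul_mul_tmul]]
    rw [tmul_tmul]
    simp only [mulIn_tmul, LinearMap.comp_apply, LinearMap.mulRight_apply,
      LinearMap.flip_apply, TensorProduct.mk_apply]
    rw [← mul_assoc (c ⊗ₜ[k] (1:A)), Algebra.TensorProduct.tmul_mul_tmul, mul_one]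
  | add t₁ t₂ h₁ h₂ =>
    simp only [mul_add, add_mul, tmul_add_left, map_add, h₁, h₂]

lemma red_right (ψ : A ⊗[k] A →ₗ[k] A ⊗[k] A) (c a c' a'' : A) (t : A ⊗[k] A) :
    Paper.tmul k A A ψ (c ⊗ₜ[k] a) ((c' ⊗ₜ[k] (1 : A)) * t * ((1 : A) ⊗ₜ[k] a''))
      = (c ⊗ₜ[k] (1 : A)) *
          mulIn' (ψ ∘ₗ TensorProduct.mk k A A a ∘ₗ LinearMap.mulLeft k c') t *
          ((1 : A) ⊗ₜ[k] a'') := by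
  induction t using TensorProduct.induction_on with
  | zero => simp [tmul_zero_right]
  | tmul d' e' =>
    rw [show (c' ⊗ₜ[k] (1 : A)) * (d' ⊗ₜ[k] e') * ((1 : A) ⊗ₜ[k] a'')
        = (c' * d') ⊗ₜ[k] (e' * a'') by simp [Algebra.TensorProduct.tmul_mul_tmul]]
    rw [tmul_tmul]
    simp only [mulIn'_tmul, LinearMap.comp_apply, LinearMap.mulLeft_apply,
      TensorProduct.mk_apply]
    rw [show ((1:A) ⊗ₜ[k] (e' * a'')) = ((1:A) ⊗ₜ[k] e') * ((1:A) ⊗ₜ[k] a'') by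
      simp [Algebra.TensorProduct.tmul_mul_tmul]]
    rw [mul_assoc, mul_assoc, mul_assoc]
  | add t₁ t₂ h₁ h₂ =>
    simp only [mul_add, add_mul, tmul_add_right, map_add, h₁, h₂]

end SCAux

set_option maxHeartbeats 4000000 in
open Paper Coalgebra in
/-- for a faithfully flat `H`-Galois extension `B ⊆ A` (with bijective
antipode) admitting a strong connection `ℓ` with `ℓ(kh) = h⁽¹⁾k⁽¹⁾ ⊗ k⁽²⁾h⁽²⁾`, the map
`ψ_ℓ(a ⊗ c) = a₍₀₎ c (a₍₁₎)⁽¹⁾ ⊗ (a₍₁₎)⁽²⁾` is a twisting map. -/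
theorem strongConnection_twistingMap
    (k : Type*) [Field k] (A : Type*) [Ring A] [Algebra k A]
    (H : Type*) [Ring H] [HopfAlgebra k H]
    -- the antipode of `H` is bijective, with inverse `sInv`:
    (sInv : H →ₗ[k] H)
    (hs1 : ∀ h : H, HopfAlgebra.antipode (R := k) (sInv h) = h)
    (hs2 : ∀ h : H, sInv (HopfAlgebra.antipode (R := k) h) = h)
    -- `B = A^{co H} ⊆ A` is a faithfully flat `H`-Galois extension:
    (δ : A →ₐ[k] A ⊗[k] H) (hδ : IsComodAlg k A H δ)
    (χ : ((A ⊗[k] A) ⧸ galSpan k A H δ) ≃ₗ[k] A ⊗[k] H)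
    (hχ : ∀ x : A ⊗[k] A, χ (galQ k A H δ x) = chi0 k A H δ x)
    (hff : IsFaithfullyFlatLeft (coinv k A H δ) A)
    -- `ℓ` is a strong connection:
    (ℓ : H →ₗ[k] A ⊗[k] A)
    (hℓ1 : ℓ 1 = (1 : A) ⊗ₜ (1 : A))
    (hℓ2 : galQ k A H δ ∘ₗ ℓ = transMap k A H δ χ)
    (hℓ3 : lTensor A δ.toLinearMap ∘ₗ ℓ
      = (TensorProduct.assoc k A A H).toLinearMap ∘ₗ rTensor H ℓ
          ∘ₗ comul (R := k) (A := H))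
    (hℓ4 : (TensorProduct.assoc k H A A).toLinearMap
        ∘ₗ rTensor A ((TensorProduct.comm k A H).toLinearMap
            ∘ₗ lTensor A sInv ∘ₗ δ.toLinearMap)
        ∘ₗ ℓ
      = lTensor H ℓ ∘ₗ comul (R := k) (A := H))
    -- and satisfies `ℓ(kh) = h⁽¹⁾ k⁽¹⁾ ⊗ k⁽²⁾ h⁽²⁾`:
    (hℓmul : ℓ ∘ₗ LinearMap.mul' k H ∘ₗ (TensorProduct.comm k H H).toLinearMap
      = TensorProduct.map (LinearMap.mul' k A)
            (LinearMap.mul' k A ∘ₗ (TensorProduct.comm k A A).toLinearMap)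
          ∘ₗ (TensorProduct.tensorTensorTensorComm k A A A A).toLinearMap
          ∘ₗ TensorProduct.map ℓ ℓ) :
    -- then `ψ_ℓ : a ⊗ c ↦ a₍₀₎ c (a₍₁₎)⁽¹⁾ ⊗ (a₍₁₎)⁽²⁾` is a twisting map:
    ∀ ψℓ : A ⊗[k] A →ₗ[k] A ⊗[k] A,
      ψℓ = TensorProduct.map
              (LinearMap.mul' k A ∘ₗ lTensor A (LinearMap.mul' k A)) LinearMap.id
            ∘ₗ TensorProduct.map (lTensor A (TensorProduct.comm k A A).toLinearMap
                ∘ₗ (TensorProduct.assoc k A A A).toLinearMap) LinearMap.id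
            ∘ₗ (TensorProduct.assoc k (A ⊗[k] A) A A).symm.toLinearMap
            ∘ₗ lTensor (A ⊗[k] A) (TensorProduct.comm k A A).toLinearMap
            ∘ₗ (TensorProduct.assoc k (A ⊗[k] A) A A).toLinearMap
            ∘ₗ TensorProduct.map (TensorProduct.assoc k A A A).symm.toLinearMap LinearMap.id
            ∘ₗ TensorProduct.map (lTensor A ℓ) LinearMap.id
            ∘ₗ rTensor A δ.toLinearMap →
      IsTwistingMap k A A ψℓ := by
  intro ψℓ hψ
  -- Evaluation formula for `ψℓ`: `ψℓ (a ⊗ c) = mulIn ℓ (δ a * (c ⊗ 1))`.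
  have psi_eval : ∀ a c : A, ψℓ (a ⊗ₜ[k] c)
      = SCAux.mulIn ℓ (δ.toLinearMap a * (c ⊗ₜ[k] (1 : H))) := by
    intro a c
    rw [hψ]
    simp only [LinearMap.comp_apply, rTensor_tmul, map_tmul, LinearMap.id_coe, id_eq,
      LinearEquiv.coe_coe]
    generalize δ.toLinearMap a = t
    induction t using TensorProduct.induction_on with
    | zero => simp [zero_tmul]
    | tmul x h =>
      simp only [lTensor_tmul]
      rw [show (x ⊗ₜ[k] h : A ⊗[k] H) * (c ⊗ₜ[k] (1 : H)) = (x * c) ⊗ₜ[k] h by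
        simp [Algebra.TensorProduct.tmul_mul_tmul]]
      rw [SCAux.mulIn_tmul]
      generalize ℓ h = s
      induction s using TensorProduct.induction_on with
      | zero => simp [tmul_zero, zero_tmul]
      | tmul u v =>
        simp [Algebra.TensorProduct.tmul_mul_tmul, mul_assoc]
      | add s₁ s₂ h₁ h₂ =>
        simp only [tmul_add, add_tmul, map_add, mul_add, h₁, h₂]
    | add t₁ t₂ h₁ h₂ =>
      simp only [add_tmul, tmul_add, map_add, add_mul, h₁, h₂]
  -- The key Galois identity: `Σ h⁽¹⁾ h⁽²⁾₍₀₎ ⊗ h⁽²⁾₍₁₎ = 1 ⊗ h`.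
  have hK : ∀ g : H,
      rTensor H (LinearMap.mul' k A) (rTensor H ℓ (comul (R := k) (A := H) g))
        = (1 : A) ⊗ₜ[k] g := by
    intro g
    have h3 := LinearMap.congr_fun hℓ3 g
    simp only [LinearMap.comp_apply, LinearEquiv.coe_coe] at h3
    have h3' : rTensor H ℓ (comul (R := k) (A := H) g)
        = (TensorProduct.assoc k A A H).symm (lTensor A δ.toLinearMap (ℓ g)) := by
      rw [h3, LinearEquiv.symm_apply_apply]
    have hc : chi0 k A H δ (ℓ g) = (1 : A) ⊗ₜ[k] g := by
      rw [← hχ (ℓ g)]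
      have h2 := LinearMap.congr_fun hℓ2 g
      simp only [LinearMap.comp_apply] at h2
      rw [h2]
      simp [Paper.transMap, LinearMap.comp_apply]
    rw [h3', ← hc]
    simp [Paper.chi0, LinearMap.comp_apply]
  -- The multiplicativity identity for `ℓ`, packaged.
  have key1 : ∀ (t : A ⊗[k] H) (q : A) (g : H),
      SCAux.mulIn' (SCAux.mulIn ℓ ∘ₗ LinearMap.mulLeft k t
          ∘ₗ (TensorProduct.mk k A H).flip (1 : H) ∘ₗ LinearMap.mulLeft k q) (ℓ g)
        = SCAux.mulIn ℓ (t * (q ⊗ₜ[k] g)) := by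
    intro t
    induction t using TensorProduct.induction_on with
    | zero =>
      intro q g
      rw [LinearMap.mulLeft_zero_eq_zero]
      rw [show (SCAux.mulIn ℓ ∘ₗ (0 : A ⊗[k] H →ₗ[k] A ⊗[k] H)
          ∘ₗ (TensorProduct.mk k A H).flip (1 : H) ∘ₗ LinearMap.mulLeft k q)
          = (0 : A →ₗ[k] A ⊗[k] A) by ext d; simp]
      rw [SCAux.mulIn'_zeroφ]
      simp
    | tmul x h =>
      intro q g
      have hφ : (SCAux.mulIn ℓ ∘ₗ LinearMap.mulLeft k ((x ⊗ₜ[k] h : A ⊗[k] H))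
            ∘ₗ (TensorProduct.mk k A H).flip (1 : H) ∘ₗ LinearMap.mulLeft k q)
          = (LinearMap.mulRight k (ℓ h) ∘ₗ (TensorProduct.mk k A A).flip (1 : A)
            ∘ₗ LinearMap.mulLeft k x ∘ₗ LinearMap.mulLeft k q) := by
        ext d
        simp [Algebra.TensorProduct.tmul_mul_tmul]
      rw [hφ, SCAux.slm]
      have hm := LinearMap.congr_fun hℓmul (g ⊗ₜ[k] h)
      simp only [LinearMap.comp_apply, LinearEquiv.coe_coe, comm_tmul, mul'_apply,
        map_tmul] at hm
      rw [show ((x ⊗ₜ[k] h : A ⊗[k] H) * (q ⊗ₜ[k] g)) = (x * q) ⊗ₜ[k] (h * g) by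
        simp [Algebra.TensorProduct.tmul_mul_tmul]]
      rw [SCAux.mulIn_tmul, hm]
    | add t₁ t₂ h₁ h₂ =>
      intro q g
      have hadd : LinearMap.mulLeft k (t₁ + t₂)
          = LinearMap.mulLeft k t₁ + LinearMap.mulLeft k t₂ := by
        ext z; simp [add_mul]
      rw [hadd]
      rw [show (SCAux.mulIn ℓ ∘ₗ (LinearMap.mulLeft k t₁ + LinearMap.mulLeft k t₂)
          ∘ₗ (TensorProduct.mk k A H).flip (1 : H) ∘ₗ LinearMap.mulLeft k q)
        = (SCAux.mulIn ℓ ∘ₗ LinearMap.mulLeft k t₁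
            ∘ₗ (TensorProduct.mk k A H).flip (1 : H) ∘ₗ LinearMap.mulLeft k q)
          + (SCAux.mulIn ℓ ∘ₗ LinearMap.mulLeft k t₂
            ∘ₗ (TensorProduct.mk k A H).flip (1 : H) ∘ₗ LinearMap.mulLeft k q) by
        ext d; simp]
      rw [SCAux.mulIn'_addφ, h₁ q g, h₂ q g, add_mul, map_add]
  -- Left core computation.
  have coreL : ∀ a c' a' c'' : A,
      SCAux.mulIn (ψℓ ∘ₗ (TensorProduct.mk k A A).flip c'' ∘ₗ LinearMap.mulRight k a')
          (ψℓ (a ⊗ₜ[k] c'))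
        = SCAux.mulIn ℓ ((δ.toLinearMap a * (c' ⊗ₜ[k] (1 : H)))
            * (δ.toLinearMap a' * (c'' ⊗ₜ[k] (1 : H)))) := by
    intro a c' a' c''
    have hφ : (ψℓ ∘ₗ (TensorProduct.mk k A A).flip c'' ∘ₗ LinearMap.mulRight k a')
        = (SCAux.mulIn ℓ
            ∘ₗ LinearMap.mulRight k (δ.toLinearMap a' * (c'' ⊗ₜ[k] (1 : H)))
            ∘ₗ δ.toLinearMap) := by
      ext e
      simp only [LinearMap.comp_apply, LinearMap.mulRight_apply, LinearMap.flip_apply,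
        TensorProduct.mk_apply]
      rw [psi_eval]
      rw [show δ.toLinearMap (e * a') = δ.toLinearMap e * δ.toLinearMap a' by
        simp [map_mul]]
      rw [mul_assoc]
    rw [hφ, psi_eval]
    have main : ∀ t : A ⊗[k] H,
        SCAux.mulIn (SCAux.mulIn ℓ
            ∘ₗ LinearMap.mulRight k (δ.toLinearMap a' * (c'' ⊗ₜ[k] (1 : H)))
            ∘ₗ δ.toLinearMap)
          (SCAux.mulIn ℓ t)
          = SCAux.mulIn ℓ (t * (δ.toLinearMap a' * (c'' ⊗ₜ[k] (1 : H)))) := by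
      intro t
      induction t using TensorProduct.induction_on with
      | zero => simp
      | tmul p g =>
        rw [SCAux.mulIn_tmul, SCAux.mulIn_pmul]
        have hΦ2 : ∀ (v : A) (z : A ⊗[k] H),
            (SCAux.mulIn ℓ
              ∘ₗ LinearMap.mulRight k (δ.toLinearMap a' * (c'' ⊗ₜ[k] (1 : H))))
                ((v ⊗ₜ[k] (1 : H)) * z)
              = (v ⊗ₜ[k] (1 : A)) * (SCAux.mulIn ℓ
                  ∘ₗ LinearMap.mulRight k (δ.toLinearMap a' * (c'' ⊗ₜ[k] (1 : H)))) z := by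
          intro v z
          simp only [LinearMap.comp_apply, LinearMap.mulRight_apply]
          rw [mul_assoc, SCAux.mulIn_pmul]
        have h3 := LinearMap.congr_fun hℓ3 g
        simp only [LinearMap.comp_apply, LinearEquiv.coe_coe] at h3
        have hsplit : (SCAux.mulIn ℓ
              ∘ₗ LinearMap.mulRight k (δ.toLinearMap a' * (c'' ⊗ₜ[k] (1 : H)))
              ∘ₗ δ.toLinearMap)
            = ((SCAux.mulIn ℓ
              ∘ₗ LinearMap.mulRight k (δ.toLinearMap a' * (c'' ⊗ₜ[k] (1 : H))))
              ∘ₗ δ.toLinearMap) := rfl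
        rw [hsplit, SCAux.mulIn_comp, LinearMap.comp_apply, h3,
          SCAux.slk _ hΦ2, hK g]
        simp only [SCAux.mulIn_tmul, LinearMap.comp_apply, TensorProduct.mk_apply,
          LinearMap.mulRight_apply]
        rw [show ((1 : A) ⊗ₜ[k] (1 : A)) = (1 : A ⊗[k] A) from rfl, one_mul]
        rw [← SCAux.mulIn_pmul, ← mul_assoc, Algebra.TensorProduct.tmul_mul_tmul,
          mul_one, one_mul]
      | add t₁ t₂ h₁ h₂ => simp only [map_add, add_mul, h₁, h₂]
    exact main _
  -- Right core computation.
  have coreR : ∀ a c' a' c'' : A,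
      SCAux.mulIn' (ψℓ ∘ₗ TensorProduct.mk k A A a ∘ₗ LinearMap.mulLeft k c')
          (ψℓ (a' ⊗ₜ[k] c''))
        = SCAux.mulIn ℓ ((δ.toLinearMap a * (c' ⊗ₜ[k] (1 : H)))
            * (δ.toLinearMap a' * (c'' ⊗ₜ[k] (1 : H)))) := by
    intro a c' a' c''
    rw [psi_eval a' c'']
    have hφ : (ψℓ ∘ₗ TensorProduct.mk k A A a ∘ₗ LinearMap.mulLeft k c')
        = (SCAux.mulIn ℓ ∘ₗ LinearMap.mulLeft k (δ.toLinearMap a)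
            ∘ₗ (TensorProduct.mk k A H).flip (1 : H) ∘ₗ LinearMap.mulLeft k c') := by
      ext d
      simp only [LinearMap.comp_apply, LinearMap.mulLeft_apply, LinearMap.flip_apply,
        TensorProduct.mk_apply]
      rw [psi_eval]
    rw [hφ]
    have main : ∀ w : A ⊗[k] H,
        SCAux.mulIn' (SCAux.mulIn ℓ ∘ₗ LinearMap.mulLeft k (δ.toLinearMap a)
            ∘ₗ (TensorProduct.mk k A H).flip (1 : H) ∘ₗ LinearMap.mulLeft k c')
          (SCAux.mulIn ℓ w)
        = SCAux.mulIn ℓ (δ.toLinearMap a * ((c' ⊗ₜ[k] (1 : H)) * w)) := by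
      intro w
      induction w using TensorProduct.induction_on with
      | zero => simp
      | tmul p g =>
        rw [SCAux.mulIn_tmul, SCAux.mulIn'_pmul]
        have hcomp : ((SCAux.mulIn ℓ ∘ₗ LinearMap.mulLeft k (δ.toLinearMap a)
              ∘ₗ (TensorProduct.mk k A H).flip (1 : H) ∘ₗ LinearMap.mulLeft k c')
            ∘ₗ LinearMap.mulLeft k p)
          = (SCAux.mulIn ℓ ∘ₗ LinearMap.mulLeft k (δ.toLinearMap a)
              ∘ₗ (TensorProduct.mk k A H).flip (1 : H)
              ∘ₗ LinearMap.mulLeft k (c' * p)) := by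
          ext d
          simp [mul_assoc]
        rw [hcomp, key1]
        rw [show ((c' ⊗ₜ[k] (1 : H)) * (p ⊗ₜ[k] g)) = (c' * p) ⊗ₜ[k] g by
          simp [Algebra.TensorProduct.tmul_mul_tmul]]
      | add w₁ w₂ h₁ h₂ => simp only [map_add, mul_add, h₁, h₂]
    rw [main, mul_assoc]
  -- Conclude associativity.
  intro x y z
  induction x using TensorProduct.induction_on with
  | zero => simp [SCAux.tmul_zero_left]
  | add x₁ x₂ h₁ h₂ => simp [SCAux.tmul_add_left, h₁, h₂]
  | tmul c a =>
    induction y using TensorProduct.induction_on with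
    | zero => simp [SCAux.tmul_zero_left, SCAux.tmul_zero_right]
    | add y₁ y₂ h₁ h₂ => simp [SCAux.tmul_add_left, SCAux.tmul_add_right, h₁, h₂]
    | tmul c' a' =>
      induction z using TensorProduct.induction_on with
      | zero => simp [SCAux.tmul_zero_right]
      | add z₁ z₂ h₁ h₂ => simp [SCAux.tmul_add_right, h₁, h₂]
      | tmul c'' a'' =>
        rw [SCAux.tmul_tmul ψℓ c a c' a', SCAux.red_left,
          SCAux.tmul_tmul ψℓ c' a' c'' a'', SCAux.red_right,
          coreL a c' a' c'', coreR a c' a' c'']
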